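/- arXiv:1703.10636 — 2 statements merged into one kernel-verified Lean document; each statement's English description precedes it below -/
import Mathlib

section
/- (Hannah's lemma.) Suppose given four categories C, C₁, C₂, C̄ and four adjunctions L₁ ⊣ R₁ (L₁ : C ⥤ C₁), L₂ ⊣ R₂ (L₂ : C₁ ⥤ C₂), L ⊣ R (L : C ⥤ C̄), and L̄ ⊣ R̄ (L̄ : C̄ ⥤ C₂), together with a natural isomorphism R₂ ⋙ R₁ ≅ R̄ ⋙ R (i.e., R₁ ∘ R₂ ≅ R ∘ R̄ as functors C₂ ⥤ C), and suppose the Beck–Chevalley condition holds: the canonical natural transformation L ∘ R₁ ⟶ R̄ ∘ L₂ (obtained as the mate of the given isomorphism, i.e., the composite L R₁ ⟶ L R₁ R₂ L₂ ≅ L R R̄ L₂ ⟶ R̄ L₂ using the unit of L₂ ⊣ R₂ and the counit of L ⊣ R) is an isomorphism. If R₁ and R₂ are both monadic, then the composite R₂ ⋙ R₁ (i.e., R₁ ∘ R₂ : C₂ ⥤ C) is monadic. -/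
/-
Copyright (c) 2020 Bhavik Mehta. All rights reserved.
Released under Apache 2.0 license as described in the file LICENSE.
Authors: Bhavik Mehta
-/

/-!
# Monadicity theorems

We prove monadicity theorems which can establish a given functor is monadic. In particular, we
show three versions of Beck's monadicity theorem, and the reflexive (crude) monadicity theorem:

`G` is a monadic right adjoint if it has a left adjoint, and:

* `D` has, `G` preserves and reflects `G`-split coequalizers, see
  `CategoryTheory.Monad.monadicOfHasPreservesReflectsGSplitCoequalizers`
* `G` creates `G`-split coequalizers, see
  `CategoryTheory.Monad.monadicOfCreatesGSplitCoequalizers`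
  (The converse of this is also shown, see
   `CategoryTheory.Monad.createsGSplitCoequalizersOfMonadic`)
* `D` has and `G` preserves `G`-split coequalizers, and `G` reflects isomorphisms, see
  `CategoryTheory.Monad.monadicOfHasPreservesGSplitCoequalizersOfReflectsIsomorphisms`
* `D` has and `G` preserves reflexive coequalizers, and `G` reflects isomorphisms, see
  `CategoryTheory.Monad.monadicOfHasPreservesReflexiveCoequalizersOfReflectsIsomorphisms`

This file has been adapted to `Mathlib.CategoryTheory.Monad.Comonadicity`.
Please try to keep them in sync.

## Tags

Beck, monadicity, descent

-/

universe s₁ s₂ t₁ t₂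

namespace CategoryTheory

namespace Monad2
open Monad

open Limits

noncomputable section

-- Hide the implementation details in this namespace.
namespace Monad2icityInternal

variable {C : Type t₁} {D : Type t₂}
variable [Category.{s₁} C] [Category.{s₂} D]
variable {G : D ⥤ C} {F : C ⥤ D} (adj : F ⊣ G)

/-- The "main pair" for an algebra `(A, α)` is the pair of morphisms `(F α, ε_FA)`. It is always a
reflexive pair, and will be used to construct the left adjoint to the comparison functor and show it
is an equivalence.
-/
instance main_pair_reflexive (A : adj.toMonad.Algebra) :
    IsReflexivePair (F.map A.a) (adj.counit.app (F.obj A.A)) := by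
  apply IsReflexivePair.mk' (F.map (adj.unit.app _)) _ _
  · exact (F.map_comp _ _).symm.trans ((congr_arg F.map A.unit).trans (F.map_id _))
  · exact adj.left_triangle_components _

/-- The "main pair" for an algebra `(A, α)` is the pair of morphisms `(F α, ε_FA)`. It is always a
`G`-split pair, and will be used to construct the left adjoint to the comparison functor and show it
is an equivalence.
-/
instance main_pair_G_split (A : adj.toMonad.Algebra) :
    G.IsSplitPair (F.map A.a)
      (adj.counit.app (F.obj A.A)) where
  splittable := ⟨_, _, ⟨beckSplitCoequalizer A⟩⟩

/-- The object function for the left adjoint to the comparison functor. -/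
def comparisonLeftAdjointObj (A : adj.toMonad.Algebra)
    [HasCoequalizer (F.map A.a) (adj.counit.app _)] : D :=
  coequalizer (F.map A.a) (adj.counit.app _)

set_option linter.unusedVariables false in
/--
We have a bijection of homsets which will be used to construct the left adjoint to the comparison
functor.
-/
@[simps!]
def comparisonLeftAdjointHomEquiv (A : adj.toMonad.Algebra) (B : D)
    [HasCoequalizer (F.map A.a) (adj.counit.app (F.obj A.A))] :
    (comparisonLeftAdjointObj adj A ⟶ B) ≃ (A ⟶ (comparison adj).obj B) :=
  calc
    (comparisonLeftAdjointObj adj A ⟶ B) ≃ { f : F.obj A.A ⟶ B // _ } :=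
      Cofork.IsColimit.homIso (colimit.isColimit _) B
    _ ≃ { g : A.A ⟶ G.obj B // G.map (F.map g) ≫ G.map (adj.counit.app B) = A.a ≫ g } := by
      refine (adj.homEquiv _ _).subtypeEquiv ?_
      intro f
      rw [← (adj.homEquiv _ _).injective.eq_iff, Adjunction.homEquiv_naturality_left,
        adj.homEquiv_unit, adj.homEquiv_unit]
      erw [G.map_comp]
      dsimp
      erw [adj.right_triangle_components_assoc, ← G.map_comp, F.map_comp, Category.assoc,
        adj.counit_naturality, adj.left_triangle_components_assoc]
      apply eq_comm
    _ ≃ (A ⟶ (comparison adj).obj B) :=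
      { toFun := fun g =>
          { f := _
            h := g.prop }
        invFun := fun f => ⟨f.f, f.h⟩
        left_inv := fun g => by ext; rfl
        right_inv := fun f => by ext; rfl }

/-- Construct the adjunction to the comparison functor.
-/
def leftAdjointComparison
    [∀ A : adj.toMonad.Algebra, HasCoequalizer (F.map A.a)
      (adj.counit.app (F.obj A.A))] :
    adj.toMonad.Algebra ⥤ D := by
  refine
    Adjunction.leftAdjointOfEquiv (G := comparison adj)
      (F_obj := fun A => comparisonLeftAdjointObj adj A) (fun A B => ?_) ?_
  · apply comparisonLeftAdjointHomEquiv
  · intro A B B' g h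
    ext1
    -- Porting note: the goal was previously closed by the following, which succeeds until
    -- `Category.assoc`.
    -- dsimp [comparisonLeftAdjointHomEquiv]
    -- rw [← adj.homEquiv_naturality_right, Category.assoc]
    exact (congrArg (adj.homEquiv _ _) (Category.assoc _ _ _).symm).trans
      (adj.homEquiv_naturality_right _ _)

/-- Provided we have the appropriate coequalizers, we have an adjunction to the comparison functor.
-/
@[simps! counit]
def comparisonAdjunction
    [∀ A : adj.toMonad.Algebra, HasCoequalizer (F.map A.a)
      (adj.counit.app (F.obj A.A))] :
    leftAdjointComparison adj ⊣ comparison adj :=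
  Adjunction.adjunctionOfEquivLeft _ _

variable {adj}

theorem comparisonAdjunction_unit_f_aux
    [∀ A : adj.toMonad.Algebra, HasCoequalizer (F.map A.a)
      (adj.counit.app (F.obj A.A))]
    (A : adj.toMonad.Algebra) :
    ((comparisonAdjunction adj).unit.app A).f =
      adj.homEquiv A.A _
        (coequalizer.π (F.map A.a) (adj.counit.app (F.obj A.A))) :=
  congr_arg (adj.homEquiv _ _) (Category.comp_id _)

/-- This is a cofork which is helpful for establishing monadicity: the morphism from the Beck
coequalizer to this cofork is the unit for the adjunction on the comparison functor.
-/
@[simps! pt]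
def unitCofork (A : adj.toMonad.Algebra)
    [HasCoequalizer (F.map A.a) (adj.counit.app (F.obj A.A))] :
    Cofork (G.map (F.map A.a)) (G.map (adj.counit.app (F.obj A.A))) :=
  Cofork.ofπ (G.map (coequalizer.π (F.map A.a) (adj.counit.app (F.obj A.A))))
    (by
      change _ = G.map _ ≫ _
      exact (G.map_comp _ _).symm.trans ((congr_arg G.map (coequalizer.condition _ _)).trans (G.map_comp _ _)))

@[simp]
theorem unitCofork_π (A : adj.toMonad.Algebra)
    [HasCoequalizer (F.map A.a) (adj.counit.app (F.obj A.A))] :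
    (unitCofork A).π = G.map (coequalizer.π (F.map A.a) (adj.counit.app (F.obj A.A))) :=
  rfl

theorem comparisonAdjunction_unit_f
    [∀ A : adj.toMonad.Algebra, HasCoequalizer (F.map A.a)
      (adj.counit.app (F.obj A.A))]
    (A : adj.toMonad.Algebra) :
    ((comparisonAdjunction adj).unit.app A).f = (beckCoequalizer A).desc (unitCofork A) := by
  apply Limits.Cofork.IsColimit.hom_ext (beckCoequalizer A)
  erw [Cofork.IsColimit.π_desc]
  dsimp only [beckCofork_π, unitCofork_π]
  erw [comparisonAdjunction_unit_f_aux, ← adj.homEquiv_naturality_left A.a, coequalizer.condition,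
    adj.homEquiv_naturality_right, adj.homEquiv_unit, Category.assoc]
  apply adj.right_triangle_components_assoc

variable (adj)

/-- The cofork which describes the counit of the adjunction: the morphism from the coequalizer of
this pair to this morphism is the counit.
-/
@[simps!]
def counitCofork (B : D) :
    Cofork (F.map (G.map (adj.counit.app B)))
      (adj.counit.app (F.obj (G.obj B))) :=
  Cofork.ofπ (adj.counit.app B) (adj.counit_naturality _)

variable {adj} in
/-- The unit cofork is a colimit provided `G` preserves it. -/
def unitColimitOfPreservesCoequalizer (A : adj.toMonad.Algebra)
    [HasCoequalizer (F.map A.a) (adj.counit.app (F.obj A.A))]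
    [PreservesColimit (parallelPair (F.map A.a) (adj.counit.app (F.obj A.A))) G] :
    IsColimit (unitCofork (G := G) A) :=
  isColimitOfHasCoequalizerOfPreservesColimit G _ _

/-- The counit cofork is a colimit provided `G` reflects it. -/
def counitCoequalizerOfReflectsCoequalizer (B : D)
    [ReflectsColimit (parallelPair (F.map (G.map (adj.counit.app B)))
      (adj.counit.app (F.obj (G.obj B)))) G] :
    IsColimit (counitCofork (adj := adj) B) :=
  isColimitOfIsColimitCoforkMap G _ (beckCoequalizer ((comparison adj).obj B))

-- Porting note: Lean 3 didn't seem to need this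
instance
    [∀ A : adj.toMonad.Algebra, HasCoequalizer (F.map A.a) (adj.counit.app (F.obj A.A))]
    (B : D) : HasColimit (parallelPair
      (F.map (G.map (NatTrans.app adj.counit B)))
      (NatTrans.app adj.counit (F.obj (G.obj B)))) :=
  inferInstanceAs <| HasCoequalizer
    (F.map ((comparison adj).obj B).a)
    (adj.counit.app (F.obj ((comparison adj).obj B).A))

theorem comparisonAdjunction_counit_app
    [∀ A : adj.toMonad.Algebra, HasCoequalizer (F.map A.a) (adj.counit.app (F.obj A.A))] (B : D) :
    (comparisonAdjunction adj).counit.app B = colimit.desc _ (counitCofork adj B) := by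
  apply coequalizer.hom_ext
  erw [colimit.ι_desc, colimit.ι_desc]
  exact (congrArg (fun k => k ≫ adj.counit.app B) (F.map_id (G.obj B))).trans (Category.id_comp _)

end Monad2icityInternal

open CategoryTheory Adjunction Monad
open CategoryTheory.Monad2.Monad2icityInternal

variable {C : Type t₁} {D : Type t₂}
variable [Category.{s₁} C] [Category.{s₂} D]
variable {G : D ⥤ C} {F : C ⥤ D} (adj : F ⊣ G)

variable (G) in
/--
If `G` is monadic, it creates colimits of `G`-split pairs. This is the "boring" direction of Beck's
monadicity theorem, the converse is given in `monadicOfCreatesGSplitCoequalizers`.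
-/
def createsGSplitCoequalizersOfMonadic [MonadicRightAdjoint G] ⦃A B⦄ (f g : A ⟶ B)
    [G.IsSplitPair f g] : CreatesColimit (parallelPair f g) G := by
  apply (config := {allowSynthFailures := true}) monadicCreatesColimitOfPreservesColimit
    -- Porting note: oddly (config := {allowSynthFailures := true}) had no effect here and below
  all_goals
    apply @preservesColimit_of_iso_diagram _ _ _ _ _ _ _ _ _ (diagramIsoParallelPair.{s₁} _).symm ?_
    dsimp
    infer_instance

section BeckMonadicity

-- Porting note: added these to replace parametric instances https://github.com/leanprover/lean4/issues/2311
-- When this is fixed the proofs below that struggle with instances should be reviewed.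
-- [∀ ⦃A B⦄ (f g : A ⟶ B) [G.IsSplitPair f g], HasCoequalizer f g]
class HasCoequalizerOfIsSplitPair (G : D ⥤ C) : Prop where
  out : ∀ {A B} (f g : A ⟶ B) [G.IsSplitPair f g], HasCoequalizer f g

-- Porting note: cannot find synth order
-- instance {A B} (f g : A ⟶ B) [G.IsSplitPair f g] [HasCoequalizerOfIsSplitPair G] :
--     HasCoequalizer f g := HasCoequalizerOfIsSplitPair.out f g

instance [HasCoequalizerOfIsSplitPair G] : ∀ (A : Algebra adj.toMonad),
    HasCoequalizer (F.map A.a)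
      (adj.counit.app (F.obj A.A)) :=
  fun _ => HasCoequalizerOfIsSplitPair.out G _ _

-- Porting note: added these to replace parametric instances https://github.com/leanprover/lean4/issues/2311
-- [∀ ⦃A B⦄ (f g : A ⟶ B) [G.IsSplitPair f g], PreservesColimit (parallelPair f g) G]
class PreservesColimitOfIsSplitPair (G : D ⥤ C) where
  out : ∀ {A B} (f g : A ⟶ B) [G.IsSplitPair f g], PreservesColimit (parallelPair f g) G

instance {A B} (f g : A ⟶ B) [G.IsSplitPair f g] [PreservesColimitOfIsSplitPair G] :
    PreservesColimit (parallelPair f g) G := PreservesColimitOfIsSplitPair.out f g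

instance [PreservesColimitOfIsSplitPair G] : ∀ (A : Algebra adj.toMonad),
   PreservesColimit (parallelPair (F.map A.a)
      (NatTrans.app adj.counit (F.obj A.A))) G :=
  fun _ => PreservesColimitOfIsSplitPair.out _ _

-- Porting note: added these to replace parametric instances https://github.com/leanprover/lean4/issues/2311
-- [∀ ⦃A B⦄ (f g : A ⟶ B) [G.IsSplitPair f g], ReflectsColimit (parallelPair f g) G] :
class ReflectsColimitOfIsSplitPair (G : D ⥤ C) where
  out : ∀ {A B} (f g : A ⟶ B) [G.IsSplitPair f g], ReflectsColimit (parallelPair f g) G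

instance {A B} (f g : A ⟶ B) [G.IsSplitPair f g] [ReflectsColimitOfIsSplitPair G] :
    ReflectsColimit (parallelPair f g) G := ReflectsColimitOfIsSplitPair.out f g

instance [ReflectsColimitOfIsSplitPair G] : ∀ (A : Algebra adj.toMonad),
    ReflectsColimit (parallelPair (F.map A.a)
      (NatTrans.app adj.counit (F.obj A.A))) G :=
  fun _ => ReflectsColimitOfIsSplitPair.out _ _

/-- To show `G` is a monadic right adjoint, we can show it preserves and reflects `G`-split
coequalizers, and `D` has them.
-/
def monadicOfHasPreservesReflectsGSplitCoequalizers [HasCoequalizerOfIsSplitPair G]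
    [PreservesColimitOfIsSplitPair G] [ReflectsColimitOfIsSplitPair G] :
    MonadicRightAdjoint G where
  L := F
  adj := adj
  eqv := by
    have : ∀ (X : Algebra adj.toMonad), IsIso ((comparisonAdjunction adj).unit.app X) := by
      intro X
      apply @isIso_of_reflects_iso _ _ _ _ _ _ _ (Monad.forget adj.toMonad) ?_ _
      · change IsIso ((comparisonAdjunction adj).unit.app X).f
        rw [comparisonAdjunction_unit_f]
        change
          IsIso
            (IsColimit.coconePointUniqueUpToIso (beckCoequalizer X)
                (unitColimitOfPreservesCoequalizer X)).hom
        exact (IsColimit.coconePointUniqueUpToIso _ _).isIso_hom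
    have : ∀ (Y : D), IsIso ((comparisonAdjunction adj).counit.app Y) := by
      intro Y
      rw [comparisonAdjunction_counit_app]
      -- Porting note: passing instances through
      change IsIso (IsColimit.coconePointUniqueUpToIso _ ?_).hom
      infer_instance
      -- Porting note: passing instances through
      apply @counitCoequalizerOfReflectsCoequalizer _ _ _ _ _ _ _ _ ?_
      letI _ :
        G.IsSplitPair (F.map (G.map (adj.counit.app Y)))
          (adj.counit.app (F.obj (G.obj Y))) :=
        Monad2icityInternal.main_pair_G_split _ ((comparison adj).obj Y)
      infer_instance
    exact (comparisonAdjunction adj).toEquivalence.isEquivalence_inverse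

-- Porting note: added these to replace parametric instances https://github.com/leanprover/lean4/issues/2311
-- [∀ ⦃A B⦄ (f g : A ⟶ B) [G.IsSplitPair f g], CreatesColimit (parallelPair f g) G] :
class CreatesColimitOfIsSplitPair (G : D ⥤ C) where
  out : ∀ {A B} (f g : A ⟶ B) [G.IsSplitPair f g], CreatesColimit (parallelPair f g) G

instance {A B} (f g : A ⟶ B) [G.IsSplitPair f g] [CreatesColimitOfIsSplitPair G] :
    CreatesColimit (parallelPair f g) G := CreatesColimitOfIsSplitPair.out f g

instance [CreatesColimitOfIsSplitPair G] : ∀ (A : Algebra adj.toMonad),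
    CreatesColimit (parallelPair (F.map A.a)
      (NatTrans.app adj.counit (F.obj A.A))) G :=
  fun _ => CreatesColimitOfIsSplitPair.out _ _

/--
Beck's monadicity theorem. If `G` has a left adjoint and creates coequalizers of `G`-split pairs,
then it is monadic.
This is the converse of `createsGSplitCoequalizersOfMonadic`.
-/
def monadicOfCreatesGSplitCoequalizers [CreatesColimitOfIsSplitPair G] :
    MonadicRightAdjoint G := by
  let I {A B} (f g : A ⟶ B) [G.IsSplitPair f g] : HasColimit (parallelPair f g ⋙ G) := by
    apply @hasColimit_of_iso _ _ _ _ _ _ ?_ (diagramIsoParallelPair.{s₁} _)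
    exact inferInstanceAs <| HasCoequalizer (G.map f) (G.map g)
  have : HasCoequalizerOfIsSplitPair G := ⟨fun _ _ => hasColimit_of_created (parallelPair _ _) G⟩
  have : PreservesColimitOfIsSplitPair G := ⟨by intros; infer_instance⟩
  have : ReflectsColimitOfIsSplitPair G := ⟨by intros; infer_instance⟩
  exact monadicOfHasPreservesReflectsGSplitCoequalizers adj

/-- An alternate version of Beck's monadicity theorem. If `G` reflects isomorphisms, preserves
coequalizers of `G`-split pairs and `C` has coequalizers of `G`-split pairs, then it is monadic.
-/
def monadicOfHasPreservesGSplitCoequalizersOfReflectsIsomorphisms [G.ReflectsIsomorphisms]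
    [HasCoequalizerOfIsSplitPair G] [PreservesColimitOfIsSplitPair G] :
    MonadicRightAdjoint G := by
  have : ReflectsColimitOfIsSplitPair G := ⟨fun f g _ => by
    have := HasCoequalizerOfIsSplitPair.out G f g
    apply reflectsColimit_of_reflectsIsomorphisms⟩
  apply monadicOfHasPreservesReflectsGSplitCoequalizers adj

end BeckMonadicity

section ReflexiveMonadicity

variable [HasReflexiveCoequalizers D] [G.ReflectsIsomorphisms]

-- Porting note: added these to replace parametric instances https://github.com/leanprover/lean4/issues/2311
-- [∀ ⦃A B⦄ (f g : A ⟶ B) [G.IsReflexivePair f g], PreservesColimit (parallelPair f g) G] :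
class PreservesColimitOfIsReflexivePair (G : C ⥤ D) where
  out : ∀ ⦃A B⦄ (f g : A ⟶ B) [IsReflexivePair f g], PreservesColimit (parallelPair f g) G

instance {A B} (f g : A ⟶ B) [IsReflexivePair f g] [PreservesColimitOfIsReflexivePair G] :
  PreservesColimit (parallelPair f g) G := PreservesColimitOfIsReflexivePair.out f g

instance [PreservesColimitOfIsReflexivePair G] : ∀ X : Algebra adj.toMonad,
    PreservesColimit (parallelPair (F.map X.a)
      (NatTrans.app adj.counit (F.obj X.A))) G :=
 fun _ => PreservesColimitOfIsReflexivePair.out _ _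

variable [PreservesColimitOfIsReflexivePair G]

/-- Reflexive (crude) monadicity theorem. If `G` has a right adjoint, `D` has and `G` preserves
reflexive coequalizers and `G` reflects isomorphisms, then `G` is monadic.
-/
def monadicOfHasPreservesReflexiveCoequalizersOfReflectsIsomorphisms : MonadicRightAdjoint G where
  L := F
  adj := adj
  eqv := by
    have : ∀ A : adj.toMonad.Algebra, HasCoequalizer (F.map A.a) (adj.counit.app (F.obj A.A)) :=
      fun A => by haveI := main_pair_reflexive adj A; exact HasReflexiveCoequalizers.has_coeq _ _
    have : ∀ (X : Algebra adj.toMonad), IsIso ((comparisonAdjunction adj).unit.app X) := by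
      intro X
      apply
        @isIso_of_reflects_iso _ _ _ _ _ _ _ (Monad.forget adj.toMonad) ?_ _
      · change IsIso ((comparisonAdjunction adj).unit.app X).f
        rw [comparisonAdjunction_unit_f]
        exact (IsColimit.coconePointUniqueUpToIso (beckCoequalizer X)
          (unitColimitOfPreservesCoequalizer X)).isIso_hom
    have : ∀ (Y : D), IsIso ((comparisonAdjunction adj).counit.app Y) := by
      intro Y
      rw [comparisonAdjunction_counit_app]
      -- Porting note: passing instances through
      change IsIso (IsColimit.coconePointUniqueUpToIso _ ?_).hom
      infer_instance
      -- Porting note: passing instances through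
      apply @counitCoequalizerOfReflectsCoequalizer _ _ _ _ _ _ _ _ ?_
      apply reflectsColimit_of_reflectsIsomorphisms
    exact (comparisonAdjunction adj).toEquivalence.isEquivalence_inverse

end ReflexiveMonadicity

end

end Monad2

end CategoryTheory

namespace CategoryTheory

open Limits

universe w₁ w₂ w₃ z₁ z₂ z₃

section SplitTransfer

variable {A : Type z₁} {B : Type z₂} [Category.{w₁} A] [Category.{w₂} B]

/-- Transport `HasSplitCoequalizer` of image pairs along a natural isomorphism. -/
lemma hasSplitCoequalizer_of_natIso {F G : A ⥤ B} (h : F ≅ G) {X Y : A} (u v : X ⟶ Y)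
    [HasSplitCoequalizer (F.map u) (F.map v)] :
    HasSplitCoequalizer (G.map u) (G.map v) := by
  obtain ⟨Z, π, ⟨q⟩⟩ := HasSplitCoequalizer.splittable (f := F.map u) (g := F.map v)
  refine ⟨⟨Z, h.inv.app Y ≫ π, ⟨{
      rightSection := q.rightSection ≫ h.hom.app Y
      leftSection := h.inv.app Y ≫ q.leftSection ≫ h.hom.app X
      condition := ?_
      rightSection_π := ?_
      leftSection_bottom := ?_
      leftSection_top := ?_ }⟩⟩⟩
  · rw [← Category.assoc, h.inv.naturality, Category.assoc, q.condition,
      ← Category.assoc, ← h.inv.naturality, Category.assoc]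
  · simp [q.rightSection_π]
  · simp [← NatTrans.naturality]
  · simp [← NatTrans.naturality]

end SplitTransfer

/-- A monadic right adjoint reflects isomorphisms. -/
lemma monadic_reflectsIsomorphisms {A : Type z₁} {B : Type z₂} [Category.{w₁} A]
    [Category.{w₂} B] (R : B ⥤ A) [MonadicRightAdjoint R] : R.ReflectsIsomorphisms := by
  constructor
  intro X Y f hf
  have h : IsIso ((Monad.comparison (monadicAdjunction R) ⋙
      (monadicAdjunction R).toMonad.forget).map f) := by
    rw [NatIso.isIso_map_iff (Monad.comparisonForget (monadicAdjunction R)) f]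
    exact hf
  exact isIso_of_reflects_iso f
    (Monad.comparison (monadicAdjunction R) ⋙ (monadicAdjunction R).toMonad.forget)

end CategoryTheory
namespace CategoryTheory

open Limits

universe q₁ q₂ q₃ p₁ p₂ p₃

section PPHelpers

variable {A : Type p₁} {B : Type p₂} {E : Type p₃}
  [Category.{q₁} A] [Category.{q₂} B] [Category.{q₃} E]

/-- The composite of a parallel pair diagram with a functor is the parallel pair of images. -/
def hannahPPIso (F : A ⥤ B) {X Y : A} (u v : X ⟶ Y) :
    parallelPair u v ⋙ F ≅ parallelPair (F.map u) (F.map v) :=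
  diagramIsoParallelPair (parallelPair u v ⋙ F)

lemma hannah_pp_preserves (F : A ⥤ B) {X Y : A} (u v : X ⟶ Y) (S : B ⥤ E)
    (h : PreservesColimit (parallelPair (F.map u) (F.map v)) S) :
    PreservesColimit (parallelPair u v ⋙ F) S :=
  preservesColimit_of_iso_diagram S (hannahPPIso F u v).symm

lemma hannah_pp_reflects (F : A ⥤ B) {X Y : A} (u v : X ⟶ Y) (S : B ⥤ E)
    (h : ReflectsColimit (parallelPair (F.map u) (F.map v)) S) :
    ReflectsColimit (parallelPair u v ⋙ F) S :=
  reflectsColimit_of_iso_diagram S (hannahPPIso F u v).symm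

lemma hannah_pp_has (F : A ⥤ B) {X Y : A} (u v : X ⟶ Y)
    (h : HasColimit (parallelPair (F.map u) (F.map v))) :
    HasColimit (parallelPair u v ⋙ F) :=
  hasColimit_of_iso (hannahPPIso F u v)

end PPHelpers

section HannahCore

variable {C : Type p₁} [Category.{q₁} C] {C₁ : Type p₂} [Category.{q₂} C₁]
  {C₂ : Type p₃} [Category.{q₃} C₂]
  {R₁ : C₁ ⥤ C} {R₂ : C₂ ⥤ C₁} [MonadicRightAdjoint R₁] [MonadicRightAdjoint R₂]
  {K : C ⥤ C}

/-- If `(u, v)` is an `R₁`-split pair, so is its image under `J := monadicLeftAdjoint R₂ ⋙ R₂`,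
thanks to the Beck–Chevalley type isomorphism `J ⋙ R₁ ≅ R₁ ⋙ K`. -/
lemma hannah_splitPair_J (Iso₁ : (monadicLeftAdjoint R₂ ⋙ R₂) ⋙ R₁ ≅ R₁ ⋙ K)
    {X Y : C₁} (u v : X ⟶ Y) [R₁.IsSplitPair u v] :
    R₁.IsSplitPair ((monadicLeftAdjoint R₂ ⋙ R₂).map u)
      ((monadicLeftAdjoint R₂ ⋙ R₂).map v) := by
  haveI : HasSplitCoequalizer ((R₁ ⋙ K).map u) ((R₁ ⋙ K).map v) :=
    inferInstanceAs (HasSplitCoequalizer (K.map (R₁.map u)) (K.map (R₁.map v)))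
  exact hasSplitCoequalizer_of_natIso Iso₁.symm u v

/-- An `R₁`-split pair has a coequalizer in `C₁`. -/
lemma hannah_hasColimit {X Y : C₁} (u v : X ⟶ Y) [R₁.IsSplitPair u v] :
    HasColimit (parallelPair u v) := by
  letI : CreatesColimit (parallelPair u v) R₁ :=
    Monad2.createsGSplitCoequalizersOfMonadic R₁ u v
  haveI : HasColimit (parallelPair u v ⋙ R₁) :=
    hannah_pp_has R₁ u v
      (inferInstanceAs (HasColimit (parallelPair (R₁.map u) (R₁.map v))))
  exact hasColimit_of_created (parallelPair u v) R₁

/-- `R₁` preserves coequalizers of `R₁`-split pairs. -/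
lemma hannah_preserves_R₁ {X Y : C₁} (u v : X ⟶ Y) [R₁.IsSplitPair u v] :
    PreservesColimit (parallelPair u v) R₁ := by
  letI : CreatesColimit (parallelPair u v) R₁ :=
    Monad2.createsGSplitCoequalizersOfMonadic R₁ u v
  haveI : HasColimit (parallelPair u v ⋙ R₁) :=
    hannah_pp_has R₁ u v
      (inferInstanceAs (HasColimit (parallelPair (R₁.map u) (R₁.map v))))
  exact preservesColimit_of_createsColimit_and_hasColimit _ _

/-- The monad of `R₂` preserves coequalizers of `R₁`-split pairs. -/
lemma hannah_preserves_J (Iso₁ : (monadicLeftAdjoint R₂ ⋙ R₂) ⋙ R₁ ≅ R₁ ⋙ K)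
    {X Y : C₁} (u v : X ⟶ Y) [R₁.IsSplitPair u v] :
    PreservesColimit (parallelPair u v) (monadicLeftAdjoint R₂ ⋙ R₂) := by
  haveI := hannah_splitPair_J Iso₁ u v
  haveI : PreservesColimit (parallelPair u v) R₁ := hannah_preserves_R₁ u v
  haveI : PreservesColimit (parallelPair u v ⋙ R₁) K :=
    hannah_pp_preserves R₁ u v K inferInstance
  haveI : PreservesColimit (parallelPair u v) (R₁ ⋙ K) := inferInstance
  haveI : PreservesColimit (parallelPair u v) ((monadicLeftAdjoint R₂ ⋙ R₂) ⋙ R₁) :=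
    preservesColimit_of_natIso _ Iso₁.symm
  haveI : ReflectsColimit (parallelPair u v ⋙ (monadicLeftAdjoint R₂ ⋙ R₂)) R₁ := by
    letI : CreatesColimit (parallelPair ((monadicLeftAdjoint R₂ ⋙ R₂).map u)
        ((monadicLeftAdjoint R₂ ⋙ R₂).map v)) R₁ :=
      Monad2.createsGSplitCoequalizersOfMonadic R₁ _ _
    exact hannah_pp_reflects (monadicLeftAdjoint R₂ ⋙ R₂) u v R₁ inferInstance
  exact preservesColimit_of_reflects_of_preserves (monadicLeftAdjoint R₂ ⋙ R₂) R₁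

/-- `R₂` creates coequalizers of pairs whose `R₂`-image is an `R₁`-split pair. -/
noncomputable def hannah_creates_R₂ (Iso₁ : (monadicLeftAdjoint R₂ ⋙ R₂) ⋙ R₁ ≅ R₁ ⋙ K)
    {X Y : C₂} (f g : X ⟶ Y) [R₁.IsSplitPair (R₂.map f) (R₂.map g)] :
    CreatesColimit (parallelPair f g) R₂ := by
  haveI i1 : PreservesColimit (parallelPair f g ⋙ R₂) (monadicLeftAdjoint R₂ ⋙ R₂) :=
    hannah_pp_preserves R₂ f g _ (hannah_preserves_J Iso₁ (R₂.map f) (R₂.map g))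
  haveI isp := hannah_splitPair_J Iso₁ (R₂.map f) (R₂.map g)
  haveI i2 : PreservesColimit ((parallelPair f g ⋙ R₂) ⋙ (monadicLeftAdjoint R₂ ⋙ R₂))
      (monadicLeftAdjoint R₂ ⋙ R₂) :=
    hannah_pp_preserves (R₂ ⋙ (monadicLeftAdjoint R₂ ⋙ R₂)) f g _
      (hannah_preserves_J Iso₁ ((monadicLeftAdjoint R₂ ⋙ R₂).map (R₂.map f))
        ((monadicLeftAdjoint R₂ ⋙ R₂).map (R₂.map g)))
  exact monadicCreatesColimitOfPreservesColimit R₂ (parallelPair f g)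

/-- Hannah's lemma, abstract form: if there is a functor `K : C ⥤ C` together with a natural
isomorphism `(monadicLeftAdjoint R₂ ⋙ R₂) ⋙ R₁ ≅ R₁ ⋙ K`, and `R₁`, `R₂` are monadic, then
`R₂ ⋙ R₁` is monadic. -/
theorem hannah_aux (K : C ⥤ C)
    (Iso₁ : (monadicLeftAdjoint R₂ ⋙ R₂) ⋙ R₁ ≅ R₁ ⋙ K) :
    Nonempty (MonadicRightAdjoint (R₂ ⋙ R₁)) := by
  haveI h1 : Monad2.HasCoequalizerOfIsSplitPair (R₂ ⋙ R₁) := by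
    constructor
    intro X Y f g hs
    haveI : HasSplitCoequalizer (R₁.map (R₂.map f)) (R₁.map (R₂.map g)) := hs
    letI : CreatesColimit (parallelPair f g) R₂ := hannah_creates_R₂ Iso₁ f g
    haveI : HasColimit (parallelPair f g ⋙ R₂) :=
      hannah_pp_has R₂ f g (hannah_hasColimit (R₁ := R₁) (R₂.map f) (R₂.map g))
    exact hasColimit_of_created (parallelPair f g) R₂
  haveI h2 : Monad2.PreservesColimitOfIsSplitPair (R₂ ⋙ R₁) := by
    constructor
    intro X Y f g hs
    haveI : HasSplitCoequalizer (R₁.map (R₂.map f)) (R₁.map (R₂.map g)) := hs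
    letI : CreatesColimit (parallelPair f g) R₂ := hannah_creates_R₂ Iso₁ f g
    haveI : HasColimit (parallelPair f g ⋙ R₂) :=
      hannah_pp_has R₂ f g (hannah_hasColimit (R₁ := R₁) (R₂.map f) (R₂.map g))
    haveI : PreservesColimit (parallelPair f g) R₂ :=
      preservesColimit_of_createsColimit_and_hasColimit _ _
    haveI : PreservesColimit (parallelPair f g ⋙ R₂) R₁ :=
      hannah_pp_preserves R₂ f g R₁ (hannah_preserves_R₁ (R₁ := R₁) (R₂.map f) (R₂.map g))
    exact inferInstance
  haveI : R₁.ReflectsIsomorphisms := monadic_reflectsIsomorphisms R₁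
  haveI : R₂.ReflectsIsomorphisms := monadic_reflectsIsomorphisms R₂
  exact ⟨Monad2.monadicOfHasPreservesGSplitCoequalizersOfReflectsIsomorphisms
    ((monadicAdjunction R₁).comp (monadicAdjunction R₂))⟩

end HannahCore

end CategoryTheory

open CategoryTheory Limits

universe v₁ v₂ v₃ u₁ u₂ u₃

universe v₄ u₄

/-- Hannah's lemma: given a square of adjunctions commuting up to a natural isomorphism
`R₂ ⋙ R₁ ≅ R̄ ⋙ R` and satisfying the Beck–Chevalley condition (the mate
`R₁ ⋙ L ⟶ L₂ ⋙ R̄` of the isomorphism is an isomorphism), if `R₁` and `R₂` are monadic then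
so is the composite `R₂ ⋙ R₁`. -/
theorem hannah_lemma
    {C : Type u₁} [Category.{v₁} C] {C₁ : Type u₂} [Category.{v₂} C₁]
    {C₂ : Type u₃} [Category.{v₃} C₂] {Cbar : Type u₄} [Category.{v₄} Cbar]
    {L₁ : C ⥤ C₁} {R₁ : C₁ ⥤ C} (adj₁ : L₁ ⊣ R₁)
    {L₂ : C₁ ⥤ C₂} {R₂ : C₂ ⥤ C₁} (adj₂ : L₂ ⊣ R₂)
    {L : C ⥤ Cbar} {R : Cbar ⥤ C} (adj : L ⊣ R)
    {Lbar : Cbar ⥤ C₂} {Rbar : C₂ ⥤ Cbar} (adjbar : Lbar ⊣ Rbar)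
    (iso : R₂ ⋙ R₁ ≅ Rbar ⋙ R)
    (bc : IsIso ((mateEquiv adj₂ adj).symm iso.hom))
    [MonadicRightAdjoint R₁] [MonadicRightAdjoint R₂] :
    Nonempty (MonadicRightAdjoint (R₂ ⋙ R₁)) := by
  haveI := bc
  let θ : R₁ ⋙ L ≅ L₂ ⋙ Rbar := asIso ((mateEquiv adj₂ adj).symm iso.hom)
  let e₂ : monadicLeftAdjoint R₂ ≅ L₂ := (monadicAdjunction R₂).leftAdjointUniq adj₂
  let Iso₁ : (monadicLeftAdjoint R₂ ⋙ R₂) ⋙ R₁ ≅ R₁ ⋙ (L ⋙ R) :=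
    Functor.associator _ _ _ ≪≫ Functor.isoWhiskerLeft (monadicLeftAdjoint R₂) iso ≪≫
      (Functor.associator _ _ _).symm ≪≫
      Functor.isoWhiskerRight (Functor.isoWhiskerRight e₂ Rbar ≪≫ θ.symm) R ≪≫ Functor.associator _ _ _
  exact hannah_aux (L ⋙ R) Iso₁
end

section
/- Let C be a cartesian category and let X and Y be objects of C. If the unique morphism !_X : X ⟶ 1 to the terminal object and the projection π₂ : Y × X ⟶ X are both effective descent morphisms, then the unique morphism !_{Y × X} : Y × X ⟶ 1 is an effective descent morphism. -/
open CategoryTheory Limits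

universe v₁ v₂ v₃ u₁ u₂ u₃

/-- A morphism `f : X ⟶ Y` of a cartesian category is an effective descent morphism if the
pullback functor `f* : C/Y ⥤ C/X` is monadic. -/
def EffectiveDescentMorphism {C : Type u₁} [Category.{v₁} C] [HasFiniteLimits C]
    {X Y : C} (f : X ⟶ Y) : Prop :=
  Nonempty (MonadicRightAdjoint (Over.pullback f))


namespace EffDescentAux

variable {C : Type u₁} [Category.{v₁} C]

section Transfer
variable {D : Type u₂} [Category.{v₂} D]

/-- Split pairs transfer along a natural isomorphism of functors. -/
lemma isSplitPair_of_natIso {F G : C ⥤ D} (i : F ≅ G) {A B : C} (u v : A ⟶ B)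
    [F.IsSplitPair u v] : G.IsSplitPair u v := by
  obtain q := HasSplitCoequalizer.isSplitCoequalizer (F.map u) (F.map v)
  refine ⟨_, i.inv.app B ≫ HasSplitCoequalizer.coequalizerπ (F.map u) (F.map v), ⟨?_⟩⟩
  exact
    { rightSection := q.rightSection ≫ i.hom.app B
      leftSection := i.inv.app B ≫ q.leftSection ≫ i.hom.app A
      condition := by
        rw [← NatIso.naturality_1 i u, ← NatIso.naturality_1 i v]
        simp [q.condition]
      rightSection_π := by simp
      leftSection_bottom := by
        simp only [Category.assoc]
        rw [← i.hom.naturality v, q.leftSection_bottom_assoc, Iso.inv_hom_id_app]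
      leftSection_top := by
        simp only [Category.assoc]
        rw [← i.hom.naturality u, q.leftSection_top_assoc] }

/-- Any functor preserves coequalizers of split pairs (split coequalizers are absolute). -/
lemma preservesColimit_parallelPair_of_split {A B : C} (a b : A ⟶ B) [HasSplitCoequalizer a b]
    (F : C ⥤ D) : PreservesColimit (parallelPair a b) F := by
  have q := HasSplitCoequalizer.isSplitCoequalizer a b
  apply preservesColimit_of_preserves_colimit_cocone q.isCoequalizer
  exact (isColimitMapCoconeCoforkEquiv F q.condition).symm ((q.map F).isCoequalizer)

/-- A functor isomorphic to one that reflects isomorphisms reflects isomorphisms. -/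
lemma reflectsIsomorphisms_of_natIso {F G : C ⥤ D} (i : F ≅ G) [F.ReflectsIsomorphisms] :
    G.ReflectsIsomorphisms := by
  constructor
  intro A B φ hφ
  have : IsIso (F.map φ) := by
    rw [NatIso.isIso_map_iff i]
    exact hφ
  exact isIso_of_reflects_iso φ F

/-- A monadic right adjoint reflects isomorphisms. -/
lemma reflectsIsomorphisms_of_monadic (R : D ⥤ C) [MonadicRightAdjoint R] :
    R.ReflectsIsomorphisms :=
  reflectsIsomorphisms_of_natIso (Monad.comparisonForget (monadicAdjunction R))

/-- Composing a parallel pair diagram with a functor. -/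
noncomputable def parallelPairCompIso {A B : C} (u v : A ⟶ B) (F : C ⥤ D) :
    parallelPair u v ⋙ F ≅ parallelPair (F.map u) (F.map v) :=
  parallelPair.ext (Iso.refl _) (Iso.refl _) (by simp) (by simp)

end Transfer

section OverHelpers

/-- `Over.map m` reflects isomorphisms. -/
lemma reflectsIsomorphisms_mapOver {Z' Z : C} (w : Z' ⟶ Z) :
    (Over.map w).ReflectsIsomorphisms := by
  constructor
  intro a b φ hφ
  have h1 : IsIso ((Over.forget Z).map ((Over.map w).map φ)) := inferInstance
  have h2 : IsIso ((Over.forget Z').map φ) := h1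
  exact isIso_of_reflects_iso φ (Over.forget Z')

variable [HasBinaryProducts C]

/-- `Over.map m` reflects colimits. -/
lemma reflectsColimit_map {J : Type u₂} [Category.{v₂} J] {P V : C} (m : P ⟶ V)
    (K : J ⥤ Over P) : ReflectsColimit K (Over.map m) := by
  letI : PreservesColimitsOfSize.{v₂, u₂} (Over.forget V) :=
    (Over.forgetAdjStar V).leftAdjoint_preservesColimits
  exact ⟨fun {c} hc => ⟨isColimitOfReflects (Over.forget P)
    (isColimitOfPreserves (Over.forget V) hc)⟩⟩

omit [HasBinaryProducts C] in
/-- A parallel pair in an over category has a colimit if the underlying pair does. -/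
lemma hasColimit_overPair_of_left {Z : C} {a b : Over Z} (u v : a ⟶ b)
    [HasColimit (parallelPair u.left v.left)] : HasColimit (parallelPair u v) := by
  haveI : HasColimit (parallelPair ((Over.forget Z).map u) ((Over.forget Z).map v)) := by
    show HasColimit (parallelPair u.left v.left); infer_instance
  haveI : HasColimit (parallelPair u v ⋙ Over.forget Z) :=
    hasColimit_of_iso (parallelPairCompIso u v (Over.forget Z))
  exact hasColimit_of_created (parallelPair u v) (Over.forget Z)

/-- The underlying parallel pair of a parallel pair in an over category with colimit
has a colimit. -/
lemma hasColimit_left_of_overPair {Z : C} {a b : Over Z} (u v : a ⟶ b)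
    [HasColimit (parallelPair u v)] : HasColimit (parallelPair u.left v.left) := by
  letI : PreservesColimitsOfSize.{0, 0} (Over.forget Z) :=
    (Over.forgetAdjStar Z).leftAdjoint_preservesColimits
  haveI : HasColimit (parallelPair u v ⋙ Over.forget Z) :=
    ⟨⟨⟨_, isColimitOfPreserves (Over.forget Z) (colimit.isColimit (parallelPair u v))⟩⟩⟩
  haveI : HasColimit (parallelPair ((Over.forget Z).map u) ((Over.forget Z).map v)) :=
    hasColimit_of_iso (parallelPairCompIso u v (Over.forget Z)).symm
  exact this

end OverHelpers

section BC
variable [HasPullbacks C]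

/-- Beck–Chevalley isomorphism for the codomain fibration. -/
noncomputable def bcIso {U S T : C} (k : U ⟶ S) (t : T ⟶ S) :
    Over.map k ⋙ Over.pullback t ≅
      Over.pullback (pullback.fst k t) ⋙ Over.map (pullback.snd k t) :=
  NatIso.ofComponents
    (fun x => Over.isoMk (pullbackRightPullbackFstIso k t x.hom).symm (by simp))
    (fun {x y} φ => by
      ext
      dsimp
      apply pullback.hom_ext
      · simp
        erw [pullback.lift_fst, pullback.lift_fst]; simp
      · apply pullback.hom_ext
        · simp
          erw [pullback.lift_fst_assoc, pullback.lift_snd_assoc]; simp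
        · simp
          erw [pullback.lift_snd, pullback.lift_snd_assoc]; simp)

end BC

section Stability
variable [HasFiniteLimits C]

/-- Effective descent morphisms are stable under base change. -/
noncomputable def monadicBaseChange {V Z Z' : C} (t : V ⟶ Z) (w : Z' ⟶ Z)
    [MonadicRightAdjoint (Over.pullback t)] :
    MonadicRightAdjoint (Over.pullback (pullback.fst w t)) := by
  let t' : pullback w t ⟶ Z' := pullback.fst w t
  let w' : pullback w t ⟶ V := pullback.snd w t
  let I₀ : Over.map w ⋙ Over.pullback t ≅ Over.pullback t' ⋙ Over.map w' := bcIso w t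
  -- conservativity
  haveI : (Over.pullback t).ReflectsIsomorphisms := reflectsIsomorphisms_of_monadic _
  haveI : (Over.map w).ReflectsIsomorphisms := reflectsIsomorphisms_mapOver w
  haveI : (Over.map w ⋙ Over.pullback t).ReflectsIsomorphisms := inferInstance
  haveI : (Over.pullback t' ⋙ Over.map w').ReflectsIsomorphisms :=
    reflectsIsomorphisms_of_natIso I₀
  haveI : (Over.pullback t').ReflectsIsomorphisms :=
    reflectsIsomorphisms_of_comp (Over.pullback t') (Over.map w')
  -- has and preserves coequalizers of split pairs
  haveI : Monad.HasCoequalizerOfIsSplitPair (Over.pullback t') := by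
    constructor
    intro a b u v hs
    haveI : (Over.pullback t' ⋙ Over.map w').IsSplitPair u v := by
      show HasSplitCoequalizer ((Over.map w').map ((Over.pullback t').map u))
        ((Over.map w').map ((Over.pullback t').map v))
      infer_instance
    haveI s2 : (Over.map w ⋙ Over.pullback t).IsSplitPair u v :=
      isSplitPair_of_natIso I₀.symm u v
    haveI s3 : (Over.pullback t).IsSplitPair ((Over.map w).map u) ((Over.map w).map v) := s2
    haveI := Monad.createsGSplitCoequalizersOfMonadic (G := Over.pullback t)
      ((Over.map w).map u) ((Over.map w).map v)
    haveI : HasColimit (parallelPair ((Over.map w).map u) ((Over.map w).map v) ⋙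
        Over.pullback t) :=
      hasColimit_of_iso (parallelPairCompIso _ _ (Over.pullback t))
    haveI hBup : HasColimit (parallelPair ((Over.map w).map u) ((Over.map w).map v)) :=
      hasColimit_of_created _ (Over.pullback t)
    haveI : HasColimit (parallelPair u.left v.left) :=
      hasColimit_left_of_overPair ((Over.map w).map u) ((Over.map w).map v)
    exact hasColimit_overPair_of_left u v
  haveI : Monad.PreservesColimitOfIsSplitPair (Over.pullback t') := by
    constructor
    intro a b u v hs
    haveI : (Over.pullback t' ⋙ Over.map w').IsSplitPair u v := by
      show HasSplitCoequalizer ((Over.map w').map ((Over.pullback t').map u))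
        ((Over.map w').map ((Over.pullback t').map v))
      infer_instance
    haveI s2 : (Over.map w ⋙ Over.pullback t).IsSplitPair u v :=
      isSplitPair_of_natIso I₀.symm u v
    haveI s3 : (Over.pullback t).IsSplitPair ((Over.map w).map u) ((Over.map w).map v) := s2
    haveI := Monad.createsGSplitCoequalizersOfMonadic (G := Over.pullback t)
      ((Over.map w).map u) ((Over.map w).map v)
    haveI : HasColimit (parallelPair ((Over.map w).map u) ((Over.map w).map v) ⋙
        Over.pullback t) :=
      hasColimit_of_iso (parallelPairCompIso _ _ (Over.pullback t))
    haveI hBup : HasColimit (parallelPair ((Over.map w).map u) ((Over.map w).map v)) :=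
      hasColimit_of_created _ (Over.pullback t)
    -- `map w ⋙ pullback t` preserves the coequalizer of `(u, v)`
    letI : PreservesColimitsOfSize.{0, 0} (Over.map w) :=
      (Over.mapPullbackAdj w).leftAdjoint_preservesColimits
    haveI : PreservesColimit (parallelPair u v ⋙ Over.map w) (Over.pullback t) :=
      preservesColimit_of_iso_diagram (Over.pullback t)
        (parallelPairCompIso u v (Over.map w)).symm
    haveI : PreservesColimit (parallelPair u v) (Over.map w ⋙ Over.pullback t) :=
      inferInstance
    haveI : PreservesColimit (parallelPair u v) (Over.pullback t' ⋙ Over.map w') :=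
      preservesColimit_of_natIso (parallelPair u v) I₀
    haveI : ReflectsColimit (parallelPair u v ⋙ Over.pullback t') (Over.map w') :=
      reflectsColimit_map w' _
    exact preservesColimit_of_reflects_of_preserves (Over.pullback t') (Over.map w')
  exact Monad.monadicOfHasPreservesGSplitCoequalizersOfReflectsIsomorphisms
    (Over.mapPullbackAdj t')

variable {X V : C} (t : V ⟶ X) [MonadicRightAdjoint (Over.pullback t)]

/-- A pair which is split after pulling back along an effective descent morphism has a
coequalizer. -/
lemma hasColimit_of_splitPair {a b : Over X} (u v : a ⟶ b)
    [(Over.pullback t).IsSplitPair u v] : HasColimit (parallelPair u v) := by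
  haveI := Monad.createsGSplitCoequalizersOfMonadic (G := Over.pullback t) u v
  haveI : HasColimit (parallelPair u v ⋙ Over.pullback t) :=
    hasColimit_of_iso (parallelPairCompIso u v (Over.pullback t))
  exact hasColimit_of_created (parallelPair u v) (Over.pullback t)

/-- A coequalizer of a pair which is split after pulling back along an effective descent
morphism is preserved by every pullback functor. -/
lemma preservesColimit_pullback_of_splitPair {a b : Over X} (u v : a ⟶ b)
    [(Over.pullback t).IsSplitPair u v] {Z' : C} (w : Z' ⟶ X) :
    PreservesColimit (parallelPair u v) (Over.pullback w) := by
  let t' : pullback w t ⟶ Z' := pullback.fst w t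
  let w' : pullback w t ⟶ V := pullback.snd w t
  haveI : MonadicRightAdjoint (Over.pullback t') := monadicBaseChange t w
  let Jc : Over.pullback t ⋙ Over.pullback w' ≅ Over.pullback w ⋙ Over.pullback t' :=
    (Over.pullbackComp w' t).symm ≪≫ eqToIso (by congr 1; exact pullback.condition.symm) ≪≫
      Over.pullbackComp t' w
  haveI s1 : (Over.pullback t ⋙ Over.pullback w').IsSplitPair u v := by
    show HasSplitCoequalizer ((Over.pullback w').map ((Over.pullback t).map u))
      ((Over.pullback w').map ((Over.pullback t).map v))
    infer_instance
  haveI s2 : (Over.pullback w ⋙ Over.pullback t').IsSplitPair u v :=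
    isSplitPair_of_natIso Jc u v
  haveI s3 : (Over.pullback t').IsSplitPair ((Over.pullback w).map u)
      ((Over.pullback w).map v) := s2
  -- the composite `pullback t ⋙ pullback w'` preserves the coequalizer of (u, v)
  haveI := Monad.createsGSplitCoequalizersOfMonadic (G := Over.pullback t) u v
  haveI : HasColimit (parallelPair u v ⋙ Over.pullback t) :=
    hasColimit_of_iso (parallelPairCompIso u v (Over.pullback t))
  haveI : PreservesColimit (parallelPair u v) (Over.pullback t) := inferInstance
  haveI : PreservesColimit (parallelPair ((Over.pullback t).map u) ((Over.pullback t).map v))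
      (Over.pullback w') := preservesColimit_parallelPair_of_split _ _ _
  haveI : PreservesColimit (parallelPair u v ⋙ Over.pullback t) (Over.pullback w') :=
    preservesColimit_of_iso_diagram (Over.pullback w')
      (parallelPairCompIso u v (Over.pullback t)).symm
  haveI : PreservesColimit (parallelPair u v) (Over.pullback t ⋙ Over.pullback w') :=
    inferInstance
  haveI : PreservesColimit (parallelPair u v) (Over.pullback w ⋙ Over.pullback t') :=
    preservesColimit_of_natIso (parallelPair u v) Jc
  -- now reflect along `pullback t'`
  haveI := Monad.createsGSplitCoequalizersOfMonadic (G := Over.pullback t')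
    ((Over.pullback w).map u) ((Over.pullback w).map v)
  haveI : ReflectsColimit (parallelPair ((Over.pullback w).map u) ((Over.pullback w).map v))
      (Over.pullback t') := inferInstance
  haveI : ReflectsColimit (parallelPair u v ⋙ Over.pullback w) (Over.pullback t') :=
    reflectsColimit_of_iso_diagram (Over.pullback t')
      (parallelPairCompIso u v (Over.pullback w)).symm
  exact preservesColimit_of_reflects_of_preserves (Over.pullback w) (Over.pullback t')

end Stability

end EffDescentAux
section E3
open CategoryTheory Limits EffDescentAux

variable {C : Type u₁} [Category.{v₁} C] [HasFiniteLimits C] (X Y : C)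

namespace EffDescentAux

local notation "gg" => terminal.from X
local notation "ff" => (prod.snd : Y ⨯ X ⟶ X)

/-- The key Beck–Chevalley computation: the composite
`(map g ⋙ pullback g) ⋙ pullback f` is isomorphic to a composite starting with `pullback f`. -/
noncomputable def keyIso :
    (Over.map gg ⋙ Over.pullback gg) ⋙ Over.pullback ff ≅
      Over.pullback ff ⋙
        Over.pullback (prod.lift (pullback.snd (pullback.snd gg gg) ff ≫ prod.fst)
          (pullback.fst (pullback.snd gg gg) ff ≫ pullback.fst gg gg)) ⋙
        Over.map (pullback.snd (pullback.snd gg gg) ff) := by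
  refine Functor.isoWhiskerRight (bcIso gg gg) (Over.pullback ff) ≪≫
    Functor.associator _ _ _ ≪≫
    Functor.isoWhiskerLeft (Over.pullback (pullback.fst gg gg)) (bcIso (pullback.snd gg gg) ff) ≪≫
    (Functor.associator _ _ _).symm ≪≫
    Functor.isoWhiskerRight ?_ (Over.map (pullback.snd (pullback.snd gg gg) ff)) ≪≫
    Functor.associator _ _ _
  refine (Over.pullbackComp (pullback.fst (pullback.snd gg gg) ff) (pullback.fst gg gg)).symm
    ≪≫ eqToIso ?_ ≪≫
    Over.pullbackComp
      (prod.lift (pullback.snd (pullback.snd gg gg) ff ≫ prod.fst)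
        (pullback.fst (pullback.snd gg gg) ff ≫ pullback.fst gg gg)) ff
  congr 1; rw [prod.lift_snd]

/-- If a pair over `X` is `f`-split, so is its image under the monad `map g ⋙ pullback g`. -/
lemma splitPair_T_of_splitPair {a b : Over X} (u v : a ⟶ b)
    [(Over.pullback ff).IsSplitPair u v] :
    (Over.pullback ff).IsSplitPair ((Over.map gg ⋙ Over.pullback gg).map u)
      ((Over.map gg ⋙ Over.pullback gg).map v) := by
  haveI : (Over.pullback ff ⋙
      Over.pullback (prod.lift (pullback.snd (pullback.snd gg gg) ff ≫ prod.fst)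
          (pullback.fst (pullback.snd gg gg) ff ≫ pullback.fst gg gg)) ⋙
      Over.map (pullback.snd (pullback.snd gg gg) ff)).IsSplitPair u v := by
    show HasSplitCoequalizer
      ((Over.map (pullback.snd (pullback.snd gg gg) ff)).map
        ((Over.pullback (prod.lift (pullback.snd (pullback.snd gg gg) ff ≫ prod.fst)
          (pullback.fst (pullback.snd gg gg) ff ≫ pullback.fst gg gg))).map
            ((Over.pullback ff).map u)))
      ((Over.map (pullback.snd (pullback.snd gg gg) ff)).map
        ((Over.pullback (prod.lift (pullback.snd (pullback.snd gg gg) ff ≫ prod.fst)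
          (pullback.fst (pullback.snd gg gg) ff ≫ pullback.fst gg gg))).map
            ((Over.pullback ff).map v)))
    infer_instance
  have h := isSplitPair_of_natIso (keyIso X Y).symm u v
  exact h

end EffDescentAux
end E3
section Final
open CategoryTheory Limits EffDescentAux

variable {C : Type u₁} [Category.{v₁} C] [HasFiniteLimits C]

namespace EffDescentAux

/-- The composite `prod.snd ≫ terminal.from X` has monadic pullback functor. -/
noncomputable def monadicComposite (X Y : C)
    [MonadicRightAdjoint (Over.pullback (terminal.from X))]
    [MonadicRightAdjoint (Over.pullback (prod.snd : Y ⨯ X ⟶ X))] :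
    MonadicRightAdjoint
      (Over.pullback ((prod.snd : Y ⨯ X ⟶ X) ≫ terminal.from X)) := by
  have relIso : Over.pullback ((prod.snd : Y ⨯ X ⟶ X) ≫ terminal.from X) ≅
      Over.pullback (terminal.from X) ⋙ Over.pullback (prod.snd : Y ⨯ X ⟶ X) :=
    Over.pullbackComp _ _
  haveI : (Over.pullback ((prod.snd : Y ⨯ X ⟶ X) ≫ terminal.from X)).ReflectsIsomorphisms := by
    haveI := reflectsIsomorphisms_of_monadic (Over.pullback (terminal.from X))
    haveI := reflectsIsomorphisms_of_monadic (Over.pullback (prod.snd : Y ⨯ X ⟶ X))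
    exact reflectsIsomorphisms_of_natIso relIso.symm
  have main : ∀ {a b : Over (⊤_ C)} (u v : a ⟶ b),
      (Over.pullback ((prod.snd : Y ⨯ X ⟶ X) ≫ terminal.from X)).IsSplitPair u v →
      HasColimit (parallelPair u v) ∧
        PreservesColimit (parallelPair u v)
          (Over.pullback ((prod.snd : Y ⨯ X ⟶ X) ≫ terminal.from X)) := by
    intro a b u v hs
    haveI := hs
    haveI sc : (Over.pullback (terminal.from X) ⋙
        Over.pullback (prod.snd : Y ⨯ X ⟶ X)).IsSplitPair u v :=
      isSplitPair_of_natIso relIso u v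
    haveI s0 : (Over.pullback (prod.snd : Y ⨯ X ⟶ X)).IsSplitPair
        ((Over.pullback (terminal.from X)).map u) ((Over.pullback (terminal.from X)).map v) := sc
    -- coequalizer downstairs over X
    haveI hQ : HasColimit (parallelPair ((Over.pullback (terminal.from X)).map u)
        ((Over.pullback (terminal.from X)).map v)) :=
      hasColimit_of_splitPair (prod.snd : Y ⨯ X ⟶ X) _ _
    -- the monad `map g ⋙ pullback g` preserves the two relevant coequalizers
    letI : PreservesColimitsOfSize.{0, 0}
        (Over.map (pullback.snd (terminal.from X) (terminal.from X))) :=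
      (Over.mapPullbackAdj _).leftAdjoint_preservesColimits
    haveI pres1 : PreservesColimit (parallelPair ((Over.pullback (terminal.from X)).map u)
        ((Over.pullback (terminal.from X)).map v))
        (Over.map (terminal.from X) ⋙ Over.pullback (terminal.from X)) := by
      haveI : PreservesColimit (parallelPair ((Over.pullback (terminal.from X)).map u)
          ((Over.pullback (terminal.from X)).map v))
          (Over.pullback (pullback.fst (terminal.from X) (terminal.from X))) :=
        preservesColimit_pullback_of_splitPair (prod.snd : Y ⨯ X ⟶ X) _ _ _
      haveI : PreservesColimit (parallelPair ((Over.pullback (terminal.from X)).map u)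
          ((Over.pullback (terminal.from X)).map v))
          (Over.pullback (pullback.fst (terminal.from X) (terminal.from X)) ⋙
            Over.map (pullback.snd (terminal.from X) (terminal.from X))) := inferInstance
      exact preservesColimit_of_natIso _ (bcIso (terminal.from X) (terminal.from X)).symm
    haveI sT : (Over.pullback (prod.snd : Y ⨯ X ⟶ X)).IsSplitPair
        ((Over.map (terminal.from X) ⋙ Over.pullback (terminal.from X)).map
          ((Over.pullback (terminal.from X)).map u))
        ((Over.map (terminal.from X) ⋙ Over.pullback (terminal.from X)).map
          ((Over.pullback (terminal.from X)).map v)) :=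
      splitPair_T_of_splitPair X Y _ _
    haveI pres2 : PreservesColimit (parallelPair
        ((Over.map (terminal.from X) ⋙ Over.pullback (terminal.from X)).map
          ((Over.pullback (terminal.from X)).map u))
        ((Over.map (terminal.from X) ⋙ Over.pullback (terminal.from X)).map
          ((Over.pullback (terminal.from X)).map v)))
        (Over.map (terminal.from X) ⋙ Over.pullback (terminal.from X)) := by
      haveI : PreservesColimit (parallelPair
          ((Over.map (terminal.from X) ⋙ Over.pullback (terminal.from X)).map
            ((Over.pullback (terminal.from X)).map u))
          ((Over.map (terminal.from X) ⋙ Over.pullback (terminal.from X)).map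
            ((Over.pullback (terminal.from X)).map v)))
          (Over.pullback (pullback.fst (terminal.from X) (terminal.from X))) :=
        preservesColimit_pullback_of_splitPair (prod.snd : Y ⨯ X ⟶ X) _ _ _
      haveI : PreservesColimit (parallelPair
          ((Over.map (terminal.from X) ⋙ Over.pullback (terminal.from X)).map
            ((Over.pullback (terminal.from X)).map u))
          ((Over.map (terminal.from X) ⋙ Over.pullback (terminal.from X)).map
            ((Over.pullback (terminal.from X)).map v)))
          (Over.pullback (pullback.fst (terminal.from X) (terminal.from X)) ⋙
            Over.map (pullback.snd (terminal.from X) (terminal.from X))) := inferInstance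
      exact preservesColimit_of_natIso _ (bcIso (terminal.from X) (terminal.from X)).symm
    -- transfer to the abstract monad of the monadic adjunction
    have α : monadicLeftAdjoint (Over.pullback (terminal.from X)) ⋙
        Over.pullback (terminal.from X) ≅
        Over.map (terminal.from X) ⋙ Over.pullback (terminal.from X) :=
      Functor.isoWhiskerRight (Adjunction.leftAdjointUniq
        (monadicAdjunction (Over.pullback (terminal.from X)))
        (Over.mapPullbackAdj (terminal.from X))) (Over.pullback (terminal.from X))
    haveI i1 : PreservesColimit (parallelPair u v ⋙ Over.pullback (terminal.from X))
        (monadicLeftAdjoint (Over.pullback (terminal.from X)) ⋙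
          Over.pullback (terminal.from X)) := by
      haveI : PreservesColimit (parallelPair u v ⋙ Over.pullback (terminal.from X))
          (Over.map (terminal.from X) ⋙ Over.pullback (terminal.from X)) :=
        preservesColimit_of_iso_diagram _
          (parallelPairCompIso u v (Over.pullback (terminal.from X))).symm
      exact preservesColimit_of_natIso _ α.symm
    haveI i2 : PreservesColimit ((parallelPair u v ⋙ Over.pullback (terminal.from X)) ⋙
        monadicLeftAdjoint (Over.pullback (terminal.from X)) ⋙
          Over.pullback (terminal.from X))
        (monadicLeftAdjoint (Over.pullback (terminal.from X)) ⋙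
          Over.pullback (terminal.from X)) := by
      have dIso : (parallelPair u v ⋙ Over.pullback (terminal.from X)) ⋙
          (monadicLeftAdjoint (Over.pullback (terminal.from X)) ⋙
            Over.pullback (terminal.from X)) ≅
          parallelPair
            ((Over.map (terminal.from X) ⋙ Over.pullback (terminal.from X)).map
              ((Over.pullback (terminal.from X)).map u))
            ((Over.map (terminal.from X) ⋙ Over.pullback (terminal.from X)).map
              ((Over.pullback (terminal.from X)).map v)) :=
        Functor.isoWhiskerLeft _ α ≪≫
          Functor.isoWhiskerRight (parallelPairCompIso u v (Over.pullback (terminal.from X)))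
            (Over.map (terminal.from X) ⋙ Over.pullback (terminal.from X)) ≪≫
          parallelPairCompIso _ _ _
      haveI : PreservesColimit ((parallelPair u v ⋙ Over.pullback (terminal.from X)) ⋙
          monadicLeftAdjoint (Over.pullback (terminal.from X)) ⋙
            Over.pullback (terminal.from X))
          (Over.map (terminal.from X) ⋙ Over.pullback (terminal.from X)) :=
        preservesColimit_of_iso_diagram _ dIso.symm
      exact preservesColimit_of_natIso _ α.symm
    haveI : CreatesColimit (parallelPair u v) (Over.pullback (terminal.from X)) :=
      monadicCreatesColimitOfPreservesColimit _ _
    haveI : HasColimit (parallelPair u v ⋙ Over.pullback (terminal.from X)) :=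
      hasColimit_of_iso (parallelPairCompIso u v (Over.pullback (terminal.from X)))
    haveI hC : HasColimit (parallelPair u v) :=
      hasColimit_of_created _ (Over.pullback (terminal.from X))
    refine ⟨hC, ?_⟩
    haveI : PreservesColimit (parallelPair u v) (Over.pullback (terminal.from X)) :=
      inferInstance
    haveI : PreservesColimit (parallelPair ((Over.pullback (terminal.from X)).map u)
        ((Over.pullback (terminal.from X)).map v))
        (Over.pullback (prod.snd : Y ⨯ X ⟶ X)) :=
      preservesColimit_pullback_of_splitPair (prod.snd : Y ⨯ X ⟶ X) _ _ _
    haveI : PreservesColimit (parallelPair u v ⋙ Over.pullback (terminal.from X))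
        (Over.pullback (prod.snd : Y ⨯ X ⟶ X)) :=
      preservesColimit_of_iso_diagram _
        (parallelPairCompIso u v (Over.pullback (terminal.from X))).symm
    haveI : PreservesColimit (parallelPair u v)
        (Over.pullback (terminal.from X) ⋙ Over.pullback (prod.snd : Y ⨯ X ⟶ X)) :=
      inferInstance
    exact preservesColimit_of_natIso _ relIso.symm
  haveI : Monad.HasCoequalizerOfIsSplitPair
      (Over.pullback ((prod.snd : Y ⨯ X ⟶ X) ≫ terminal.from X)) :=
    ⟨by intro A B u v hs; exact (main u v hs).1⟩
  haveI : Monad.PreservesColimitOfIsSplitPair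
      (Over.pullback ((prod.snd : Y ⨯ X ⟶ X) ≫ terminal.from X)) :=
    ⟨by intro A B u v hs; exact (main u v hs).2⟩
  exact Monad.monadicOfHasPreservesGSplitCoequalizersOfReflectsIsomorphisms
    (Over.mapPullbackAdj _)

end EffDescentAux
end Final

/-- If `!_X : X ⟶ 1` and the projection `π₂ : Y ⨯ X ⟶ X` are effective descent morphisms, then
`!_{Y ⨯ X} : Y ⨯ X ⟶ 1` is an effective descent morphism. -/
theorem effectiveDescent_prod
    {C : Type u₁} [Category.{v₁} C] [HasFiniteLimits C] (X Y : C)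
    (hX : EffectiveDescentMorphism (terminal.from X))
    (hsnd : EffectiveDescentMorphism (prod.snd : Y ⨯ X ⟶ X)) :
    EffectiveDescentMorphism (terminal.from (Y ⨯ X)) := by
  obtain ⟨mX⟩ := hX
  obtain ⟨msnd⟩ := hsnd
  rw [← terminal.comp_from (prod.snd : Y ⨯ X ⟶ X)]
  exact ⟨@EffDescentAux.monadicComposite _ _ _ X Y mX msnd⟩
end
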